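/- Let X, Θ be finite sets, φ, ν fully supported on X, μ fully supported on Θ, α ∈ (0,1), u : X × Θ → ℝ. If P maximizes U(P) = E_P[u] − α D_KL(P|_ξ∥φ) − I_P(ξ,θ) subject to P|_ξ = ν, P|_θ = μ, with Schrödinger potentials a, b (so P(ξ,θ) = φ(ξ)^α ν(ξ)^{1−α} μ(θ) e^{u−a−b}), then the optimal value is additively separable: U(P) = Σ_ξ ν(ξ) a(ξ) + Σ_θ μ(θ) b(θ). -/
import Mathlib


open Finset Real

variable {X Θ : Type*} [Fintype X] [Fintype Θ]

/-- X-marginal of a joint distribution. -/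
noncomputable def margX (P : X → Θ → ℝ) (ξ : X) : ℝ := ∑ θ, P ξ θ

/-- Conditional choice probability `P(ξ|θ) = P(ξ,θ)/μ(θ)`. -/
noncomputable def ccp (P : X → Θ → ℝ) (μ : Θ → ℝ) (ξ : X) (θ : Θ) : ℝ := P ξ θ / μ θ

/-- The state-characteristic rational inattention objective. -/
noncomputable def Uobj (α : ℝ) (u : X → Θ → ℝ) (φ : X → ℝ) (μ : Θ → ℝ)
    (P : X → Θ → ℝ) : ℝ :=
  (∑ ξ, ∑ θ, P ξ θ * u ξ θ)
    - α * ∑ ξ, margX P ξ * Real.log (margX P ξ / φ ξ)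
    - ∑ ξ, ∑ θ, P ξ θ * Real.log (ccp P μ ξ θ / margX P ξ)

/-- The integrand `Y(ξ,θ;P)`. -/
noncomputable def Yfun (α : ℝ) (u : X → Θ → ℝ) (φ : X → ℝ) (μ : Θ → ℝ)
    (P : X → Θ → ℝ) (ξ : X) (θ : Θ) : ℝ :=
  u ξ θ - α * Real.log (margX P ξ / φ ξ) - Real.log (ccp P μ ξ θ / margX P ξ)


theorem optimal_value_additively_separable
    (α : ℝ) (hα : 0 < α) (hα1 : α < 1)
    (u : X → Θ → ℝ)
    (φ : X → ℝ) (hφ0 : ∀ ξ, 0 < φ ξ) (hφ1 : ∑ ξ, φ ξ = 1)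
    (ν : X → ℝ) (hν0 : ∀ ξ, 0 < ν ξ) (hν1 : ∑ ξ, ν ξ = 1)
    (μ : Θ → ℝ) (hμ0 : ∀ θ, 0 < μ θ) (hμ1 : ∑ θ, μ θ = 1)
    (a : X → ℝ) (b : Θ → ℝ)
    (P : X → Θ → ℝ)
    (hP : ∀ ξ θ, P ξ θ =
      φ ξ ^ α * ν ξ ^ (1 - α) * μ θ * Real.exp (u ξ θ - a ξ - b θ))
    (hPν : ∀ ξ, ∑ θ, P ξ θ = ν ξ) (hPμ : ∀ θ, ∑ ξ, P ξ θ = μ θ)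
    (hmax : ∀ Q : X → Θ → ℝ, (∀ ξ θ, 0 ≤ Q ξ θ) →
      (∀ ξ, ∑ θ, Q ξ θ = ν ξ) → (∀ θ, ∑ ξ, Q ξ θ = μ θ) →
      Uobj α u φ μ Q ≤ Uobj α u φ μ P) :
    Uobj α u φ μ P = (∑ ξ, ν ξ * a ξ) + ∑ θ, μ θ * b θ := by
  have hmarg : ∀ ξ, margX P ξ = ν ξ := fun ξ => hPν ξ
  have hlogP : ∀ ξ θ, Real.log (P ξ θ) =
      α * Real.log (φ ξ) + (1 - α) * Real.log (ν ξ) + Real.log (μ θ)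
        + (u ξ θ - a ξ - b θ) := by
    intro ξ θ
    rw [hP,
      Real.log_mul (mul_pos (mul_pos (Real.rpow_pos_of_pos (hφ0 ξ) _)
        (Real.rpow_pos_of_pos (hν0 ξ) _)) (hμ0 θ)).ne' (Real.exp_ne_zero _),
      Real.log_mul (mul_pos (Real.rpow_pos_of_pos (hφ0 ξ) _)
        (Real.rpow_pos_of_pos (hν0 ξ) _)).ne' (hμ0 θ).ne',
      Real.log_mul (Real.rpow_pos_of_pos (hφ0 ξ) _).ne'
        (Real.rpow_pos_of_pos (hν0 ξ) _).ne',
      Real.log_exp, Real.log_rpow (hφ0 ξ), Real.log_rpow (hν0 ξ)]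
  have hPpos : ∀ ξ θ, 0 < P ξ θ := by
    intro ξ θ; rw [hP]
    exact mul_pos (mul_pos (mul_pos (Real.rpow_pos_of_pos (hφ0 ξ) _)
      (Real.rpow_pos_of_pos (hν0 ξ) _)) (hμ0 θ)) (Real.exp_pos _)
  have key : ∀ ξ θ,
      u ξ θ - α * Real.log (margX P ξ / φ ξ)
        - Real.log (ccp P μ ξ θ / margX P ξ) = a ξ + b θ := by
    intro ξ θ
    rw [hmarg, show ccp P μ ξ θ = P ξ θ / μ θ from rfl,
      Real.log_div (div_ne_zero (hPpos ξ θ).ne' (hμ0 θ).ne') (hν0 ξ).ne',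
      Real.log_div (hPpos ξ θ).ne' (hμ0 θ).ne',
      Real.log_div (hν0 ξ).ne' (hφ0 ξ).ne', hlogP]
    ring
  have hU : Uobj α u φ μ P = ∑ ξ, ∑ θ, P ξ θ * (a ξ + b θ) := by
    unfold Uobj
    have h2 : α * ∑ ξ, margX P ξ * Real.log (margX P ξ / φ ξ)
        = ∑ ξ, ∑ θ, α * (P ξ θ * Real.log (margX P ξ / φ ξ)) := by
      rw [Finset.mul_sum]
      refine Finset.sum_congr rfl fun ξ _ => ?_
      rw [show margX P ξ * Real.log (margX P ξ / φ ξ)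
          = ∑ θ, P ξ θ * Real.log (margX P ξ / φ ξ) by
        rw [← Finset.sum_mul]; rfl, Finset.mul_sum]
    rw [h2, ← Finset.sum_sub_distrib, ← Finset.sum_sub_distrib]
    refine Finset.sum_congr rfl fun ξ _ => ?_
    rw [← Finset.sum_sub_distrib, ← Finset.sum_sub_distrib]
    refine Finset.sum_congr rfl fun θ _ => ?_
    rw [← key ξ θ]; ring
  rw [hU]
  simp_rw [mul_add, Finset.sum_add_distrib]
  congr 1
  · refine Finset.sum_congr rfl fun ξ _ => ?_
    rw [← Finset.sum_mul, hPν]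
  · rw [Finset.sum_comm]
    refine Finset.sum_congr rfl fun θ _ => ?_
    rw [← Finset.sum_mul, hPμ]
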